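/- Let K be an n×n real positive definite matrix, let P be a t×n real matrix, and let σ > 0. Define f on n×n positive definite matrices by f(S) = −(1/(2σ²))·trace(P * S * Pᵀ) − (1/2)·trace(K⁻¹ * S) + (1/2)·Real.log (S.det). Then S* = (K⁻¹ + σ⁻² Pᵀ P)⁻¹ is positive definite, and S* is the unique maximizer of f over the set of positive definite matrices: f(S) ≤ f(S*) for every positive definite S, with equality only if S = S*. -/

import Mathlib

open Matrix

lemma logDet_le_trace_aux (m : ℕ) (M : Matrix (Fin m) (Fin m) ℝ) (hM : M.PosDef) :
    Real.log M.det ≤ M.trace - m ∧ (Real.log M.det = M.trace - m → M = 1) := by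
  have hH := hM.isHermitian
  have hpos : ∀ i, 0 < hH.eigenvalues i := hM.eigenvalues_pos
  have hdet : M.det = ∏ i, hH.eigenvalues i := by simpa using hH.det_eq_prod_eigenvalues
  have hUU' : (star (hH.eigenvectorUnitary : Matrix (Fin m) (Fin m) ℝ)) *
      (hH.eigenvectorUnitary : Matrix (Fin m) (Fin m) ℝ) = 1 :=
    mem_unitaryGroup_iff'.mp hH.eigenvectorUnitary.2
  have hUU : (hH.eigenvectorUnitary : Matrix (Fin m) (Fin m) ℝ) *
      (star (hH.eigenvectorUnitary : Matrix (Fin m) (Fin m) ℝ)) = 1 :=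
    mem_unitaryGroup_iff.mp hH.eigenvectorUnitary.2
  have htr : M.trace = ∑ i, hH.eigenvalues i := by
    conv_lhs => rw [hH.spectral_theorem, Unitary.conjStarAlgAut_apply]
    rw [trace_mul_cycle, hUU', one_mul, trace_diagonal]
    simp
  have hlogdet : Real.log M.det = ∑ i, Real.log (hH.eigenvalues i) := by
    rw [hdet, Real.log_prod]
    exact fun i _ => (hpos i).ne'
  have hle : ∀ i ∈ Finset.univ, Real.log (hH.eigenvalues i) ≤ hH.eigenvalues i - 1 :=
    fun i _ => Real.log_le_sub_one_of_pos (hpos i)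
  have hsum : ∑ i : Fin m, (hH.eigenvalues i - 1) = M.trace - m := by
    rw [Finset.sum_sub_distrib, htr]; simp
  constructor
  · calc Real.log M.det = ∑ i, Real.log (hH.eigenvalues i) := hlogdet
      _ ≤ ∑ i : Fin m, (hH.eigenvalues i - 1) := Finset.sum_le_sum hle
      _ = M.trace - m := hsum
  · intro heq
    have hz : ∑ i : Fin m, ((hH.eigenvalues i - 1) - Real.log (hH.eigenvalues i)) = 0 := by
      rw [Finset.sum_sub_distrib, hsum, ← hlogdet, heq]; ring
    have h1 : ∀ j ∈ Finset.univ, 0 ≤ (hH.eigenvalues j - 1) - Real.log (hH.eigenvalues j) :=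
      fun j _ => by linarith [Real.log_le_sub_one_of_pos (hpos j)]
    have hone : ∀ i, hH.eigenvalues i = 1 := by
      intro i
      by_contra hne
      have h2 := (Finset.sum_eq_zero_iff_of_nonneg h1).mp hz i (Finset.mem_univ i)
      have := Real.log_lt_sub_one_of_pos (hpos i) hne
      linarith
    have hd : Matrix.diagonal (RCLike.ofReal ∘ hH.eigenvalues : Fin m → ℝ) = 1 := by
      have : (RCLike.ofReal ∘ hH.eigenvalues : Fin m → ℝ) = fun _ => 1 := by
        funext i; simp [hone i]
      rw [this]; exact diagonal_one
    conv_lhs => rw [hH.spectral_theorem, Unitary.conjStarAlgAut_apply]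
    rw [hd, mul_one, hUU]


/-- The variational lower bound as a function of the covariance,
`f(S) = −(1/(2σ²))·tr(P S Pᵀ) − (1/2)·tr(K⁻¹ S) + (1/2)·log det S`,
is uniquely maximized over positive definite matrices by
`S* = (K⁻¹ + σ⁻² Pᵀ P)⁻¹`, which is itself positive definite. -/
theorem optimal_variational_covariance (n t : ℕ)
    (K : Matrix (Fin n) (Fin n) ℝ) (hK : K.PosDef)
    (P : Matrix (Fin t) (Fin n) ℝ) (σ : ℝ) (hσ : 0 < σ) :
    let f : Matrix (Fin n) (Fin n) ℝ → ℝ := fun S =>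
      -(1 / (2 * σ ^ 2)) * (P * S * Pᵀ).trace - (1 / 2) * (K⁻¹ * S).trace
        + (1 / 2) * Real.log S.det
    let Sstar : Matrix (Fin n) (Fin n) ℝ := (K⁻¹ + (σ ^ 2)⁻¹ • (Pᵀ * P))⁻¹
    Sstar.PosDef ∧
      ∀ S : Matrix (Fin n) (Fin n) ℝ, S.PosDef →
        f S ≤ f Sstar ∧ (f S = f Sstar → S = Sstar) := by
  intro f Sstar
  set A : Matrix (Fin n) (Fin n) ℝ := K⁻¹ + (σ ^ 2)⁻¹ • (Pᵀ * P) with hAdef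
  -- A is positive definite
  have hPP : (Pᵀ * P).PosSemidef := by
    have := posSemidef_conjTranspose_mul_self P
    rwa [conjTranspose_eq_transpose_of_trivial] at this
  have hsmul : ((σ ^ 2)⁻¹ • (Pᵀ * P)).PosSemidef := by
    refine PosSemidef.of_dotProduct_mulVec_nonneg ?_ fun x => ?_
    · simp only [Matrix.IsHermitian, conjTranspose_smul, hPP.1.eq, star_trivial]
    · rw [smul_mulVec, dotProduct_smul]
      exact smul_nonneg (by positivity) (hPP.dotProduct_mulVec_nonneg x)
  have hA : A.PosDef := hK.inv.add_posSemidef hsmul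
  have hAunit : IsUnit A.det := hA.det_pos.ne'.isUnit
  have hSstar : Sstar.PosDef := hA.inv
  refine ⟨hSstar, fun S hS => ?_⟩
  -- rewrite f
  have hσ2 : (σ : ℝ) ^ 2 ≠ 0 := by positivity
  have hf : ∀ T : Matrix (Fin n) (Fin n) ℝ,
      f T = -(1 / 2) * (A * T).trace + (1 / 2) * Real.log T.det := by
    intro T
    show -(1 / (2 * σ ^ 2)) * (P * T * Pᵀ).trace - (1 / 2) * (K⁻¹ * T).trace
        + (1 / 2) * Real.log T.det = _
    rw [hAdef, add_mul, Matrix.smul_mul, trace_add, trace_smul, trace_mul_cycle (A := P)]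
    simp only [smul_eq_mul]
    field_simp
    ring
  -- square root of A
  set R : Matrix (Fin n) (Fin n) ℝ := (open scoped MatrixOrder in CFC.sqrt A) with hRdef
  have hRH : R.IsHermitian := (open scoped MatrixOrder in (CFC.sqrt_nonneg A).posSemidef.1)
  have hRR : R * R = A := (open scoped MatrixOrder in CFC.sqrt_mul_sqrt_self A hA.posSemidef.nonneg)
  have hRdet : R.det ≠ 0 := by
    intro h
    have : A.det = 0 := by rw [← hRR, det_mul, h, mul_zero]
    exact hA.det_pos.ne' this
  have hRunit : IsUnit R := (isUnit_iff_isUnit_det R).mpr hRdet.isUnit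
  -- M := R * S * R is positive definite
  have hM : (R * S * R).PosDef := by
    refine PosDef.of_dotProduct_mulVec_pos ?_ fun x hx => ?_
    · have := isHermitian_conjTranspose_mul_mul R hS.1
      rwa [hRH.eq] at this
    · have hinj : Function.Injective R.mulVec := mulVec_injective_iff_isUnit.mpr hRunit
      have hRx : R *ᵥ x ≠ 0 := fun h => hx (hinj (by simpa using h))
      have := hS.dotProduct_mulVec_pos hRx
      simpa only [star_mulVec, hRH.eq, dotProduct_mulVec, vecMul_vecMul,
        mul_assoc] using this
  -- trace and det relations
  have htrM : (R * S * R).trace = (A * S).trace := by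
    rw [trace_mul_cycle, hRR]
  have hdetM : (R * S * R).det = A.det * S.det := by
    rw [det_mul, det_mul, show R.det * S.det * R.det = R.det * R.det * S.det by ring,
      ← det_mul, hRR]
  have hlogM : Real.log (R * S * R).det = Real.log A.det + Real.log S.det := by
    rw [hdetM, Real.log_mul hA.det_pos.ne' hS.det_pos.ne']
  -- key inequality
  obtain ⟨hineq, hcase⟩ := logDet_le_trace_aux n (R * S * R) hM
  -- values of f
  have hAAinv : A * A⁻¹ = 1 := mul_nonsing_inv A hAunit
  have htrI : (A * Sstar).trace = (n : ℝ) := by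
    show (A * A⁻¹).trace = (n : ℝ)
    rw [hAAinv, trace_one]
    simp
  have hlogSstar : Real.log Sstar.det = -Real.log A.det := by
    show Real.log (A⁻¹).det = _
    rw [det_nonsing_inv, Ring.inverse_eq_inv, Real.log_inv]
  have hfS : f S = -(1 / 2) * (A * S).trace + (1 / 2) * Real.log S.det := hf S
  have hfSstar : f Sstar = -(1 / 2) * (n : ℝ) + (1 / 2) * (-Real.log A.det) := by
    rw [hf Sstar, htrI, hlogSstar]
  have hlogS : Real.log S.det = Real.log (R * S * R).det - Real.log A.det := by
    rw [hlogM]; ring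
  constructor
  · rw [hfS, hfSstar, hlogS, htrM.symm]
    nlinarith [hineq]
  · intro heq
    have heq2 : Real.log (R * S * R).det = (R * S * R).trace - n := by
      rw [hfS, hfSstar, hlogS, ← htrM] at heq
      nlinarith [heq]
    have hM1 : R * S * R = 1 := hcase heq2
    -- recover S
    have hS1 : S = R⁻¹ * (R * S * R) * R⁻¹ := by
      rw [mul_assoc R S R, ← mul_assoc R⁻¹, nonsing_inv_mul R hRdet.isUnit, one_mul,
        mul_assoc, mul_nonsing_inv R hRdet.isUnit, mul_one]
    rw [hM1, mul_one] at hS1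
    have : S = (R * R)⁻¹ := by rw [Matrix.mul_inv_rev, hS1]
    show S = A⁻¹
    rw [this, hRR]
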